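/- arXiv:1806.04974 — 3 statements merged into one kernel-verified Lean document; each statement's English description precedes it below -/
import Mathlib

section
/- Let F₁,...,Fₘ and G₁,...,Gₘ be k×k real symmetric positive definite matrices such that yᵀFᵢy ≥ yᵀGᵢy for every y ∈ ℝᵏ and every i, with the inequality strict for at least one i and one y. Let w₁,...,wₘ > 0 and set F = Σ wᵢFᵢ and G = Σ wᵢGᵢ. Then det F > det G. -/
open Matrix Finset


private lemma sum_mulVec' {m k : ℕ} (A : Fin m → Matrix (Fin k) (Fin k) ℝ) (x : Fin k → ℝ) :
    (∑ i, A i) *ᵥ x = ∑ i, A i *ᵥ x := by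
  induction (Finset.univ : Finset (Fin m)) using Finset.cons_induction with
  | empty => simp [Matrix.zero_mulVec]
  | cons i s hi ih => rw [Finset.sum_cons, Finset.sum_cons, Matrix.add_mulVec, ih]

private lemma dot_sum' {m k : ℕ} (v : Fin m → Fin k → ℝ) (x : Fin k → ℝ) :
    x ⬝ᵥ (∑ i, v i) = ∑ i, x ⬝ᵥ v i := by
  induction (Finset.univ : Finset (Fin m)) using Finset.cons_induction with
  | empty => simp
  | cons i s hi ih => rw [Finset.sum_cons, Finset.sum_cons, dotProduct_add, ih]

private lemma quad_sum {m k : ℕ} (w : Fin m → ℝ) (H : Fin m → Matrix (Fin k) (Fin k) ℝ)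
    (x : Fin k → ℝ) :
    x ⬝ᵥ (∑ i, w i • H i) *ᵥ x = ∑ i, w i * (x ⬝ᵥ (H i) *ᵥ x) := by
  rw [sum_mulVec', dot_sum']
  congr 1
  ext i
  rw [Matrix.smul_mulVec, dotProduct_smul, smul_eq_mul]

private lemma one_lt_det_one_add {k : ℕ} {M : Matrix (Fin k) (Fin k) ℝ}
    (hM : M.PosSemidef) {x : Fin k → ℝ} (hx : 0 < x ⬝ᵥ M *ᵥ x) :
    1 < (1 + M).det := by
  have hH := hM.1
  set U : Matrix (Fin k) (Fin k) ℝ := (hH.eigenvectorUnitary : Matrix (Fin k) (Fin k) ℝ) with hU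
  have hUU : U * star U = 1 := (Matrix.mem_unitaryGroup_iff).mp hH.eigenvectorUnitary.2
  have key : 1 + M = U * (1 + diagonal (RCLike.ofReal ∘ hH.eigenvalues)) * star U := by
    rw [mul_add, mul_one, add_mul, hUU]
    conv_lhs => rw [hH.spectral_theorem, Unitary.conjStarAlgAut_apply]
  have hdet : (1 + M).det = ∏ i, (1 + hH.eigenvalues i) := by
    rw [key, det_mul_right_comm, hUU, one_mul]
    have : (1 : Matrix (Fin k) (Fin k) ℝ) + diagonal (RCLike.ofReal ∘ hH.eigenvalues)
        = diagonal (fun i => 1 + hH.eigenvalues i) := by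
      rw [← Matrix.diagonal_one, Matrix.diagonal_add]
      rfl
    rw [this, det_diagonal]
  have hnz : ∃ i, 0 < hH.eigenvalues i := by
    by_contra h
    push_neg at h
    have hz : (RCLike.ofReal ∘ hH.eigenvalues : Fin k → ℝ) = fun _ => 0 := by
      funext i
      have := le_antisymm (h i) (hM.eigenvalues_nonneg i)
      show RCLike.ofReal (hH.eigenvalues i) = (0 : ℝ)
      rw [this, RCLike.ofReal_zero]
    have hM0 : M = 0 := by
      rw [hH.spectral_theorem, hz]
      simp
    rw [hM0] at hx
    simp at hx
  obtain ⟨i₀, hi₀⟩ := hnz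
  rw [hdet]
  calc (1 : ℝ) = ∏ _i : Fin k, (1 : ℝ) := by simp
    _ < ∏ i, (1 + hH.eigenvalues i) := by
        refine Finset.prod_lt_prod (fun i _ => one_pos) (fun i _ => ?_) ⟨i₀, Finset.mem_univ _, by linarith⟩
        have := hM.eigenvalues_nonneg i
        linarith

open scoped MatrixOrder in
private lemma det_lt_det_add {k : ℕ} {A D : Matrix (Fin k) (Fin k) ℝ}
    (hA : A.PosDef) (hD : D.PosSemidef) {x : Fin k → ℝ} (hx : 0 < x ⬝ᵥ D *ᵥ x) :
    A.det < (A + D).det := by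
  have hS : (CFC.sqrt A).PosSemidef := (CFC.sqrt_nonneg A).posSemidef
  set S := CFC.sqrt A with hSdef
  have hSS : S * S = A := CFC.sqrt_mul_sqrt_self A hA.posSemidef.nonneg
  have hdetS : S.det * S.det = A.det := by rw [← det_mul, hSS]
  have hdS : IsUnit S.det := by
    refine isUnit_iff_ne_zero.mpr fun h => ?_
    rw [h, mul_zero] at hdetS
    exact absurd hdetS.symm (ne_of_gt hA.det_pos)
  set T := S⁻¹ with hTdef
  have hTS : T * S = 1 := Matrix.nonsing_inv_mul S hdS
  have hST : S * T = 1 := Matrix.mul_nonsing_inv S hdS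
  have hT : T.IsHermitian := hS.1.inv
  have hMps : (T * D * T).PosSemidef := by
    have := hD.mul_mul_conjTranspose_same T
    rwa [hT.eq] at this
  have hxM : 0 < (S *ᵥ x) ⬝ᵥ (T * D * T) *ᵥ (S *ᵥ x) := by
    have h1 : T *ᵥ (S *ᵥ x) = x := by rw [mulVec_mulVec, hTS, one_mulVec]
    have h2 : (T * D * T) *ᵥ (S *ᵥ x) = T *ᵥ (D *ᵥ x) := by
      rw [← mulVec_mulVec, h1, ← mulVec_mulVec]
    have hTt : Tᵀ = T := by rw [← Matrix.conjTranspose_eq_transpose_of_trivial, hT.eq]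
    rw [h2, Matrix.dotProduct_mulVec, ← Matrix.mulVec_transpose, hTt, h1]
    exact hx
  have key : A + D = S * (1 + T * D * T) * S := by
    rw [mul_add, mul_one, add_mul, hSS]
    congr 1
    simp only [mul_assoc]
    rw [hTS, mul_one, ← mul_assoc, hST, one_mul]
  have hdetfac : (A + D).det = A.det * (1 + T * D * T).det := by
    rw [key, det_mul, det_mul, ← hdetS]; ring
  rw [hdetfac]
  have h1 := one_lt_det_one_add hMps hxM
  nlinarith [hA.det_pos]

theorem det_weighted_sum_lt {k m : ℕ}
    (F G : Fin m → Matrix (Fin k) (Fin k) ℝ)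
    (hF : ∀ i, (F i).PosDef) (hG : ∀ i, (G i).PosDef)
    (hge : ∀ i (y : Fin k → ℝ), y ⬝ᵥ (G i).mulVec y ≤ y ⬝ᵥ (F i).mulVec y)
    (hstrict : ∃ i, ∃ y : Fin k → ℝ, y ⬝ᵥ (G i).mulVec y < y ⬝ᵥ (F i).mulVec y)
    (w : Fin m → ℝ) (hw : ∀ i, 0 < w i) :
    (∑ i, w i • G i).det < (∑ i, w i • F i).det := by
  obtain ⟨i₀, y, hy⟩ := hstrict
  have hherm : ∀ (H : Fin m → Matrix (Fin k) (Fin k) ℝ), (∀ i, (H i).IsHermitian) →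
      (∑ i, w i • H i).IsHermitian := by
    intro H h
    show (∑ i, w i • H i)ᴴ = ∑ i, w i • H i
    rw [Matrix.conjTranspose_sum]
    refine Finset.sum_congr rfl fun i _ => ?_
    rw [Matrix.conjTranspose_smul, star_trivial, (h i).eq]
  have hGpos : (∑ i, w i • G i).PosDef := by
    refine PosDef.of_dotProduct_mulVec_pos (hherm G fun i => (hG i).isHermitian) fun v hv => ?_
    rw [star_trivial, quad_sum]
    refine Finset.sum_pos (fun i _ => mul_pos (hw i) ?_) ⟨i₀, Finset.mem_univ _⟩
    have := (hG i).dotProduct_mulVec_pos hv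
    rwa [star_trivial] at this
  have hDps : ((∑ i, w i • F i) - (∑ i, w i • G i)).PosSemidef := by
    refine PosSemidef.of_dotProduct_mulVec_nonneg ((hherm F fun i => (hF i).isHermitian).sub (hherm G fun i => (hG i).isHermitian))
      fun v => ?_
    rw [star_trivial, Matrix.sub_mulVec, dotProduct_sub, quad_sum, quad_sum, sub_nonneg]
    exact Finset.sum_le_sum fun i _ =>
      mul_le_mul_of_nonneg_left (hge i v) (hw i).le
  have hystrict : 0 < y ⬝ᵥ ((∑ i, w i • F i) - (∑ i, w i • G i)) *ᵥ y := by
    rw [Matrix.sub_mulVec, dotProduct_sub, quad_sum, quad_sum, ← Finset.sum_sub_distrib]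
    refine Finset.sum_pos' (fun i _ => ?_) ⟨i₀, Finset.mem_univ _, ?_⟩
    · have := mul_le_mul_of_nonneg_left (hge i y) (hw i).le
      linarith
    · have := mul_lt_mul_of_pos_left hy (hw i₀)
      linarith
  have := det_lt_det_add hGpos hDps hystrict
  rwa [add_sub_cancel] at this
end

section
/- Let λ < 0, let μ be a positive integrable rate function, and let N, N̄ be population functions bounded above with N̄(t) ≥ N(t) for all t and N̄(t) > N(t) on a subset of [x,∞) of positive measure. Then f(λ,μ,N̄,x) < f(λ,μ,N,x), where f(λ,μ,N,x) = ∫₀^∞ exp(2 s(0,x+z)λ) ℓ(x+z) exp(−∫₀^z ℓ(x+t)dt) dz with ℓ = 1/N and s(0,y) = ∫₀^y μ. If λ = 0, then f(λ,μ,N,x) = 1. -/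
open MeasureTheory

/-- The eigenvalue-wise contribution to the coalescent-averaged transition
matrix: `f(λ,μ,N,x) = ∫₀^∞ e^{2 s(0,x+z) λ} ℓ(x+z) e^{-∫₀^z ℓ(x+t) dt} dz`
with `ℓ = 1/N`. -/
noncomputable def coalF (lam : ℝ) (μ N : ℝ → ℝ) (x : ℝ) : ℝ :=
  ∫ z in Set.Ioi (0:ℝ),
    Real.exp (2 * (∫ t in (0:ℝ)..(x + z), μ t) * lam) * (1 / N (x + z)) *
      Real.exp (-(∫ t in (0:ℝ)..z, 1 / N (x + t)))


lemma exp_diff_bounds {u v : ℝ} (h : u ≤ v) :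
    Real.exp (-v) * (v - u) ≤ Real.exp (-u) - Real.exp (-v) ∧
    Real.exp (-u) - Real.exp (-v) ≤ Real.exp (-u) * (v - u) := by
  have h1 : Real.exp (-v) = Real.exp (-u) * Real.exp (u - v) := by
    rw [← Real.exp_add]; ring_nf
  have h5 : Real.exp (-u) = Real.exp (-v) * Real.exp (v - u) := by
    rw [← Real.exp_add]; ring_nf
  have h2 := Real.add_one_le_exp (u - v)
  have h3 := Real.add_one_le_exp (v - u)
  have h4 := Real.exp_pos (-u)
  have h6 := Real.exp_pos (-v)
  constructor <;> nlinarith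

lemma primitive_diff (p : ℝ → ℝ) (hpint : ∀ a b : ℝ, IntervalIntegrable p volume a b)
    (u v : ℝ) :
    (∫ t in (0:ℝ)..v, p t) - (∫ t in (0:ℝ)..u, p t) = ∫ t in u..v, p t := by
  have := intervalIntegral.integral_add_adjacent_intervals (hpint 0 u) (hpint u v)
  linarith

lemma primitive_mono (p : ℝ → ℝ) (hpint : ∀ a b : ℝ, IntervalIntegrable p volume a b)
    (hpnn : ∀ t, 0 ≤ p t) {u v : ℝ} (h : u ≤ v) :
    (∫ t in (0:ℝ)..u, p t) ≤ ∫ t in (0:ℝ)..v, p t := by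
  have h1 := primitive_diff p hpint u v
  have h2 : 0 ≤ ∫ t in u..v, p t :=
    intervalIntegral.integral_nonneg h (fun t _ => hpnn t)
  linarith

lemma key_interval (p : ℝ → ℝ) (hpint : ∀ a b : ℝ, IntervalIntegrable p volume a b)
    (hpnn : ∀ t, 0 ≤ p t) (b : ℝ) (hb : 0 ≤ b) :
    ∫ z in (0:ℝ)..b, p z * Real.exp (-∫ t in (0:ℝ)..z, p t)
      = 1 - Real.exp (-∫ t in (0:ℝ)..b, p t) := by
  set A : ℝ → ℝ := fun z => ∫ t in (0:ℝ)..z, p t with hAdef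
  have hAcont : Continuous A := intervalIntegral.continuous_primitive hpint 0
  have hA0 : A 0 = 0 := intervalIntegral.integral_same
  have hAmono : ∀ u v : ℝ, u ≤ v → A u ≤ A v := fun u v huv =>
    primitive_mono p hpint hpnn huv
  have hAd : ∀ u v : ℝ, A v - A u = ∫ t in u..v, p t := fun u v =>
    primitive_diff p hpint u v
  have hecont : Continuous fun z => Real.exp (-A z) :=
    Real.continuous_exp.comp hAcont.neg
  have hint : ∀ a c : ℝ,
      IntervalIntegrable (fun z => p z * Real.exp (-A z)) volume a c :=
    fun a c => (hpint a c).mul_continuousOn hecont.continuousOn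
  have hAb0 : 0 ≤ A b := by rw [← hA0]; exact hAmono 0 b hb
  have key : ∀ ε : ℝ, 0 < ε →
      |(∫ z in (0:ℝ)..b, p z * Real.exp (-A z)) - (1 - Real.exp (-A b))| ≤ ε := by
    intro ε hε
    rcases eq_or_lt_of_le hb with rfl | hb'
    · simp [hA0, le_of_lt hε]
    -- uniform continuity of A on [0,b]
    have huc : UniformContinuousOn A (Set.Icc 0 b) :=
      isCompact_Icc.uniformContinuousOn_of_continuous hAcont.continuousOn
    set ε' : ℝ := ε / (A b + 1) with hε'def
    have hε' : 0 < ε' := div_pos hε (by linarith)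
    obtain ⟨δ, hδ, hδ'⟩ := (Metric.uniformContinuousOn_iff).mp huc ε' hε'
    obtain ⟨n, hn⟩ := exists_nat_gt (b / δ)
    have hbδ : 0 < b / δ := div_pos hb' hδ
    have hn0 : 0 < (n : ℝ) := lt_trans hbδ hn
    have hnne : (n : ℝ) ≠ 0 := ne_of_gt hn0
    have hstep : b / n < δ := by
      rw [div_lt_iff₀ hn0]
      rw [div_lt_iff₀ hδ] at hn
      linarith [hn]
    have hstepnn : 0 ≤ b / n := le_of_lt (div_pos hb' hn0)
    set z : ℕ → ℝ := fun i => (i : ℝ) * (b / n) with hzdef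
    have hz0 : z 0 = 0 := by simp [hzdef]
    have hzn : z n = b := by simp only [hzdef]; field_simp
    have hzstep : ∀ i : ℕ, z (i + 1) - z i = b / n := by
      intro i; simp [hzdef]; ring
    have hzle : ∀ i : ℕ, z i ≤ z (i + 1) := by
      intro i; have := hzstep i; linarith
    have hzmem : ∀ i : ℕ, i ≤ n → z i ∈ Set.Icc (0:ℝ) b := by
      intro i hi
      constructor
      · exact mul_nonneg (Nat.cast_nonneg i) hstepnn
      · have : (i : ℝ) ≤ n := Nat.cast_le.mpr hi
        calc (i:ℝ) * (b / n) ≤ (n:ℝ) * (b / n) :=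
              mul_le_mul_of_nonneg_right this hstepnn
          _ = b := by field_simp
    -- decompose integral and telescoping sum
    have hLHS : (∫ x in (0:ℝ)..b, p x * Real.exp (-A x))
        = ∑ i ∈ Finset.range n, ∫ x in z i..z (i+1), p x * Real.exp (-A x) := by
      rw [intervalIntegral.sum_integral_adjacent_intervals (fun i _ => hint _ _)]
      rw [hz0, hzn]
    have hRHS : 1 - Real.exp (-A b)
        = ∑ i ∈ Finset.range n, (Real.exp (-A (z i)) - Real.exp (-A (z (i+1)))) := by
      rw [Finset.sum_range_sub' (fun i => Real.exp (-A (z i)))]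
      rw [hz0, hzn, hA0]; simp
    have hsum : ∑ i ∈ Finset.range n, (A (z (i+1)) - A (z i)) = A b := by
      rw [Finset.sum_range_sub (fun i => A (z i)), hz0, hzn, hA0, sub_zero]
    rw [hLHS, hRHS, ← Finset.sum_sub_distrib]
    calc |∑ i ∈ Finset.range n,
            ((∫ x in z i..z (i+1), p x * Real.exp (-A x))
              - (Real.exp (-A (z i)) - Real.exp (-A (z (i+1)))))|
        ≤ ∑ i ∈ Finset.range n,
            |(∫ x in z i..z (i+1), p x * Real.exp (-A x))
              - (Real.exp (-A (z i)) - Real.exp (-A (z (i+1))))| :=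
          Finset.abs_sum_le_sum_abs _ _
      _ ≤ ∑ i ∈ Finset.range n, ε' * (A (z (i+1)) - A (z i)) := by
          apply Finset.sum_le_sum
          intro i hi
          have hin : i < n := Finset.mem_range.mp hi
          have hmemu := hzmem i (le_of_lt hin)
          have hmemv := hzmem (i+1) hin
          set u := z i
          set v := z (i+1)
          have huv : u ≤ v := hzle i
          set c : ℝ := A v - A u with hcdef
          have hc0 : 0 ≤ c := by
            have := hAmono u v huv; linarith
          have hcε : c < ε' := by
            have hdist : dist v u < δ := by
              rw [Real.dist_eq, abs_of_nonneg (by linarith : (0:ℝ) ≤ v - u)]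
              rw [hzstep i]; exact hstep
            have := hδ' v hmemv u hmemu hdist
            rw [Real.dist_eq] at this
            calc c ≤ |A v - A u| := le_abs_self _
              _ < ε' := this
          -- bounds on the integral piece
          have hAu0 : 0 ≤ A u := by rw [← hA0]; exact hAmono 0 u hmemu.1
          have hintub : (∫ x in u..v, p x * Real.exp (-A x))
              ≤ Real.exp (-A u) * c := by
            have h1 : (∫ x in u..v, p x * Real.exp (-A x))
                ≤ ∫ x in u..v, p x * Real.exp (-A u) := by
              apply intervalIntegral.integral_mono_on huv (hint u v)
                ((hpint u v).mul_const _)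
              intro w hw
              exact mul_le_mul_of_nonneg_left
                (Real.exp_le_exp.mpr (neg_le_neg (hAmono u w hw.1))) (hpnn w)
            have h2 : (∫ x in u..v, p x * Real.exp (-A u))
                = (∫ x in u..v, p x) * Real.exp (-A u) :=
              intervalIntegral.integral_mul_const _ _
            rw [h2, ← hAd u v] at h1
            calc (∫ x in u..v, p x * Real.exp (-A x))
                ≤ (A v - A u) * Real.exp (-A u) := h1
              _ = Real.exp (-A u) * c := by rw [hcdef]; ring
          have hintlb : Real.exp (-A v) * c
              ≤ ∫ x in u..v, p x * Real.exp (-A x) := by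
            have h1 : (∫ x in u..v, p x * Real.exp (-A v))
                ≤ ∫ x in u..v, p x * Real.exp (-A x) := by
              apply intervalIntegral.integral_mono_on huv
                ((hpint u v).mul_const _) (hint u v)
              intro w hw
              exact mul_le_mul_of_nonneg_left
                (Real.exp_le_exp.mpr (neg_le_neg (hAmono w v hw.2))) (hpnn w)
            have h2 : (∫ x in u..v, p x * Real.exp (-A v))
                = (∫ x in u..v, p x) * Real.exp (-A v) :=
              intervalIntegral.integral_mul_const _ _
            rw [h2, ← hAd u v] at h1
            calc Real.exp (-A v) * c = (A v - A u) * Real.exp (-A v) := by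
                  rw [hcdef]; ring
              _ ≤ ∫ x in u..v, p x * Real.exp (-A x) := h1
          -- bounds on the exponential piece
          have hAuv : A u ≤ A v := hAmono u v huv
          obtain ⟨hexplb, hexpub⟩ := exp_diff_bounds hAuv
          have hexp1 : Real.exp (-A u) ≤ 1 := by
            rw [← Real.exp_zero]
            exact Real.exp_le_exp.mpr (by linarith)
          -- conclude
          have hwidth : Real.exp (-A u) - Real.exp (-A v) ≤ ε' := by
            calc Real.exp (-A u) - Real.exp (-A v)
                ≤ Real.exp (-A u) * (A v - A u) := hexpub
              _ ≤ 1 * c := by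
                  apply mul_le_mul hexp1 (le_of_eq rfl) hc0 zero_le_one
              _ ≤ ε' := by rw [one_mul]; exact le_of_lt hcε
          rw [abs_le]
          constructor
          · have : Real.exp (-A u) - Real.exp (-A v)
                ≤ Real.exp (-A u) * c := by
              calc Real.exp (-A u) - Real.exp (-A v)
                  ≤ Real.exp (-A u) * (A v - A u) := hexpub
                _ = Real.exp (-A u) * c := by rw [hcdef]
            nlinarith [hintlb, hexplb, hwidth, hc0,
              Real.exp_pos (-A u), Real.exp_pos (-A v)]
          · nlinarith [hintub, hexplb, hwidth, hc0,
              Real.exp_pos (-A u), Real.exp_pos (-A v)]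
      _ = ε' * A b := by rw [← Finset.mul_sum, hsum]
      _ ≤ ε := by
          rw [hε'def]
          rw [div_mul_eq_mul_div, div_le_iff₀ (by linarith)]
          nlinarith [hε]
  have habs : |(∫ z in (0:ℝ)..b, p z * Real.exp (-A z)) - (1 - Real.exp (-A b))| ≤ 0 := by
    by_contra hcon
    push_neg at hcon
    have := key (|(∫ z in (0:ℝ)..b, p z * Real.exp (-A z)) - (1 - Real.exp (-A b))| / 2)
      (by linarith)
    linarith
  have := abs_nonneg ((∫ z in (0:ℝ)..b, p z * Real.exp (-A z)) - (1 - Real.exp (-A b)))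
  have heq : (∫ z in (0:ℝ)..b, p z * Real.exp (-A z)) - (1 - Real.exp (-A b)) = 0 :=
    abs_eq_zero.mp (le_antisymm habs this)
  linarith

lemma key_Ioi (p : ℝ → ℝ) (hpint : ∀ a b : ℝ, IntervalIntegrable p volume a b)
    (c : ℝ) (hc : 0 < c) (hlb : ∀ t, c ≤ p t) :
    IntegrableOn (fun z => p z * Real.exp (-∫ t in (0:ℝ)..z, p t)) (Set.Ioi 0) volume ∧
    ∫ z in Set.Ioi (0:ℝ), p z * Real.exp (-∫ t in (0:ℝ)..z, p t) = 1 := by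
  have hpnn : ∀ t, 0 ≤ p t := fun t => le_trans hc.le (hlb t)
  set A : ℝ → ℝ := fun z => ∫ t in (0:ℝ)..z, p t with hAdef
  have hAcont : Continuous A := intervalIntegral.continuous_primitive hpint 0
  have hecont : Continuous fun z => Real.exp (-A z) :=
    Real.continuous_exp.comp hAcont.neg
  have hint : ∀ a d : ℝ,
      IntervalIntegrable (fun z => p z * Real.exp (-A z)) volume a d :=
    fun a d => (hpint a d).mul_continuousOn hecont.continuousOn
  have hfnn : ∀ z, 0 ≤ p z * Real.exp (-A z) :=
    fun z => mul_nonneg (hpnn z) (Real.exp_pos _).le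
  -- lower bound on A
  have hAlb : ∀ b : ℝ, 0 ≤ b → c * b ≤ A b := by
    intro b hb
    have h1 : (∫ t in (0:ℝ)..b, (c:ℝ)) ≤ ∫ t in (0:ℝ)..b, p t :=
      intervalIntegral.integral_mono_on hb intervalIntegrable_const (hpint 0 b)
        (fun t _ => hlb t)
    rw [intervalIntegral.integral_const, smul_eq_mul, sub_zero] at h1
    calc c * b = b * c := mul_comm _ _
      _ ≤ A b := h1
  -- tendsto of partial integrals
  have hexp0 : Filter.Tendsto (fun b : ℝ => Real.exp (-A b)) Filter.atTop (nhds 0) := by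
    have hcb : Filter.Tendsto (fun b : ℝ => c * b) Filter.atTop Filter.atTop :=
      Filter.Tendsto.const_mul_atTop hc Filter.tendsto_id
    have hbig := Real.tendsto_exp_neg_atTop_nhds_zero.comp hcb
    apply squeeze_zero_norm' _ hbig
    filter_upwards [Filter.eventually_ge_atTop (0:ℝ)] with b hb
    have := hAlb b hb
    simp only [Function.comp_apply, Real.norm_eq_abs, abs_of_pos (Real.exp_pos _)]
    exact Real.exp_le_exp.mpr (by linarith)
  have htend : Filter.Tendsto (fun b : ℝ => ∫ z in (0:ℝ)..b, p z * Real.exp (-A z))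
      Filter.atTop (nhds 1) := by
    have h1 : Filter.Tendsto (fun b : ℝ => 1 - Real.exp (-A b)) Filter.atTop (nhds 1) := by
      have := (tendsto_const_nhds (x := (1:ℝ)) (f := Filter.atTop)).sub hexp0
      simpa using this
    apply h1.congr'
    filter_upwards [Filter.eventually_ge_atTop (0:ℝ)] with b hb
    exact (key_interval p hpint hpnn b hb).symm
  -- integrability on Ioi 0
  have hIocInt : ∀ b : ℝ, IntegrableOn (fun z => p z * Real.exp (-A z)) (Set.Ioc 0 b) volume := by
    intro b
    have h1 : IntegrableOn (fun z => p z * Real.exp (-A z)) (Set.uIoc 0 b) volume :=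
      intervalIntegrable_iff.mp (hint 0 b)
    exact h1.mono_set (Set.Ioc_subset_Ioc (min_le_left _ _) (le_max_right _ _))
  have hnorm : (fun b : ℝ => ∫ z in (0:ℝ)..b, ‖p z * Real.exp (-A z)‖)
      = fun b : ℝ => ∫ z in (0:ℝ)..b, p z * Real.exp (-A z) := by
    funext b
    congr 1
    funext z
    rw [Real.norm_eq_abs, abs_of_nonneg (hfnn z)]
  have hIoiInt : IntegrableOn (fun z => p z * Real.exp (-A z)) (Set.Ioi 0) volume := by
    apply integrableOn_Ioi_of_intervalIntegral_norm_tendsto 1 0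
      (fun b => hIocInt b) Filter.tendsto_id
    rw [hnorm]
    exact htend
  refine ⟨hIoiInt, ?_⟩
  have hval := intervalIntegral_tendsto_integral_Ioi 0 hIoiInt Filter.tendsto_id
  exact tendsto_nhds_unique hval htend

lemma key_split (p q : ℝ → ℝ)
    (hpint : ∀ a b : ℝ, IntervalIntegrable p volume a b)
    (hqint : ∀ a b : ℝ, IntervalIntegrable q volume a b)
    (c : ℝ) (hc : 0 < c) (hlb : ∀ t, c ≤ p t) (hqnn : ∀ t, 0 ≤ q t) :
    IntegrableOn (fun z => q z * Real.exp (-∫ t in (0:ℝ)..z, (p t + q t)))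
      (Set.Ioi 0) volume ∧
    ∫ z in Set.Ioi (0:ℝ), p z * Real.exp (-∫ t in (0:ℝ)..z, (p t + q t))
      = 1 - ∫ z in Set.Ioi (0:ℝ), q z * Real.exp (-∫ t in (0:ℝ)..z, (p t + q t)) := by
  set s : ℝ → ℝ := fun t => p t + q t with hsdef
  have hsint : ∀ a b : ℝ, IntervalIntegrable s volume a b :=
    fun a b => (hpint a b).add (hqint a b)
  have hslb : ∀ t, c ≤ s t := fun t => le_trans (hlb t) (by simp [hsdef, hqnn t])
  have hsnn : ∀ t, 0 ≤ s t := fun t => le_trans hc.le (hslb t)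
  obtain ⟨hIntS, hvalS⟩ := key_Ioi s hsint c hc hslb
  set A : ℝ → ℝ := fun z => ∫ t in (0:ℝ)..z, s t with hAdef
  have hAcont : Continuous A := intervalIntegral.continuous_primitive hsint 0
  have hecont : Continuous fun z => Real.exp (-A z) :=
    Real.continuous_exp.comp hAcont.neg
  have hqeint : ∀ a d : ℝ,
      IntervalIntegrable (fun z => q z * Real.exp (-A z)) volume a d :=
    fun a d => (hqint a d).mul_continuousOn hecont.continuousOn
  have hseint : ∀ a d : ℝ,
      IntervalIntegrable (fun z => s z * Real.exp (-A z)) volume a d :=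
    fun a d => (hsint a d).mul_continuousOn hecont.continuousOn
  have hqenn : ∀ z, 0 ≤ q z * Real.exp (-A z) :=
    fun z => mul_nonneg (hqnn z) (Real.exp_pos _).le
  set F : ℝ → ℝ := fun b => ∫ z in (0:ℝ)..b, q z * Real.exp (-A z) with hFdef
  have hFmono : Monotone F := by
    intro a b hab
    have h1 := intervalIntegral.integral_add_adjacent_intervals
      (hqeint 0 a) (hqeint a b)
    have h2 : 0 ≤ ∫ z in a..b, q z * Real.exp (-A z) :=
      intervalIntegral.integral_nonneg hab (fun z _ => hqenn z)
    simp only [hFdef]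
    linarith
  have hFbdd : ∀ b, F b ≤ 1 := by
    intro b
    rcases le_or_gt 0 b with hb | hb
    · have h1 : F b ≤ ∫ z in (0:ℝ)..b, s z * Real.exp (-A z) := by
        apply intervalIntegral.integral_mono_on hb (hqeint 0 b) (hseint 0 b)
        intro w _
        apply mul_le_mul_of_nonneg_right _ (Real.exp_pos _).le
        simp [hsdef, le_trans hc.le (hlb w)]
      have h2 := key_interval s hsint hsnn b hb
      have h3 := (Real.exp_pos (-(∫ t in (0:ℝ)..b, s t))).le
      rw [h2] at h1
      linarith
    · have h1 : F b ≤ F 0 := hFmono hb.le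
      have h2 : F 0 = 0 := intervalIntegral.integral_same
      linarith
  have htendF : Filter.Tendsto F Filter.atTop (nhds (⨆ b, F b)) :=
    tendsto_atTop_ciSup hFmono ⟨1, Set.forall_mem_range.mpr hFbdd⟩
  have hIocInt : ∀ b : ℝ, IntegrableOn (fun z => q z * Real.exp (-A z)) (Set.Ioc 0 b) volume := by
    intro b
    have h1 : IntegrableOn (fun z => q z * Real.exp (-A z)) (Set.uIoc 0 b) volume :=
      intervalIntegrable_iff.mp (hqeint 0 b)
    exact h1.mono_set (Set.Ioc_subset_Ioc (min_le_left _ _) (le_max_right _ _))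
  have hIntQ : IntegrableOn (fun z => q z * Real.exp (-A z)) (Set.Ioi 0) volume := by
    apply integrableOn_Ioi_of_intervalIntegral_norm_tendsto (⨆ b, F b) 0
      (fun b => hIocInt b) Filter.tendsto_id
    have hnorm : (fun b : ℝ => ∫ z in (0:ℝ)..b, ‖q z * Real.exp (-A z)‖) = F := by
      funext b
      simp only [hFdef]
      congr 1
      funext z
      rw [Real.norm_eq_abs, abs_of_nonneg (hqenn z)]
    rw [hnorm]
    exact htendF
  refine ⟨hIntQ, ?_⟩
  have heq : ∀ z : ℝ, p z * Real.exp (-A z)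
      = s z * Real.exp (-A z) - q z * Real.exp (-A z) := by
    intro z; simp only [hsdef]; ring
  calc ∫ z in Set.Ioi (0:ℝ), p z * Real.exp (-A z)
      = ∫ z in Set.Ioi (0:ℝ), (s z * Real.exp (-A z) - q z * Real.exp (-A z)) := by
        apply integral_congr_ae
        exact Filter.Eventually.of_forall (fun z => heq z)
    _ = (∫ z in Set.Ioi (0:ℝ), s z * Real.exp (-A z))
        - ∫ z in Set.Ioi (0:ℝ), q z * Real.exp (-A z) :=
        integral_sub hIntS hIntQ
    _ = 1 - ∫ z in Set.Ioi (0:ℝ), q z * Real.exp (-A z) := by rw [hvalS]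

lemma shift_intervalIntegrable (f : ℝ → ℝ)
    (hf : ∀ a b : ℝ, IntervalIntegrable f volume a b) (x a b : ℝ) :
    IntervalIntegrable (fun t => f (x + t)) volume a b := by
  have h := (hf (x + a) (x + b)).comp_add_left x
  simpa using h

lemma coalF_repr (lam : ℝ) (hlam : lam ≤ 0) (x : ℝ)
    (μ : ℝ → ℝ) (hμpos : ∀ t, 0 < μ t)
    (hμint : ∀ a b : ℝ, IntervalIntegrable μ volume a b)
    (N : ℝ → ℝ) (B : ℝ) (hNpos : ∀ t, 0 < N t) (hNB : ∀ t, N t ≤ B)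
    (hNint : ∀ a b : ℝ, IntervalIntegrable (fun t => 1 / N t) volume a b) :
    coalF lam μ N x
      = Real.exp (2 * (∫ t in (0:ℝ)..x, μ t) * lam) *
        (1 - ∫ z in Set.Ioi (0:ℝ), (-(2 * lam) * μ (x + z)) *
          Real.exp (-∫ t in (0:ℝ)..z, (1 / N (x + t) + -(2 * lam) * μ (x + t)))) := by
  have hB : 0 < B := lt_of_lt_of_le (hNpos 0) (hNB 0)
  set p : ℝ → ℝ := fun t => 1 / N (x + t) with hpdef
  set q : ℝ → ℝ := fun t => -(2 * lam) * μ (x + t) with hqdef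
  have hpint : ∀ a b : ℝ, IntervalIntegrable p volume a b :=
    fun a b => shift_intervalIntegrable _ hNint x a b
  have hqint : ∀ a b : ℝ, IntervalIntegrable q volume a b :=
    fun a b => (shift_intervalIntegrable _ hμint x a b).const_mul _
  have hlb : ∀ t, 1 / B ≤ p t := by
    intro t
    exact one_div_le_one_div_of_le (hNpos (x + t)) (hNB (x + t))
  have hqnn : ∀ t, 0 ≤ q t := by
    intro t
    apply mul_nonneg (by linarith) (hμpos (x + t)).le
  obtain ⟨hIntQ, hform⟩ := key_split p q hpint hqint (1 / B) (by positivity) hlb hqnn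
  -- pointwise identity for the integrand
  have hS : ∀ z : ℝ, (∫ t in (0:ℝ)..(x + z), μ t)
      = (∫ t in (0:ℝ)..x, μ t) + ∫ t in (0:ℝ)..z, μ (x + t) := by
    intro z
    have h1 := intervalIntegral.integral_add_adjacent_intervals (hμint 0 x) (hμint x (x + z))
    have h2 : (∫ t in (0:ℝ)..z, μ (x + t)) = ∫ t in x..(x + z), μ t := by
      rw [intervalIntegral.integral_comp_add_left μ x, add_zero]
    rw [h2]
    linarith
  have hA : ∀ z : ℝ, (∫ t in (0:ℝ)..z, (p t + q t))
      = (∫ t in (0:ℝ)..z, p t) + -(2 * lam) * ∫ t in (0:ℝ)..z, μ (x + t) := by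
    intro z
    rw [intervalIntegral.integral_add (hpint 0 z) (hqint 0 z)]
    congr 1
    simp only [hqdef]
    rw [intervalIntegral.integral_const_mul]
  have hpt : ∀ z : ℝ,
      Real.exp (2 * (∫ t in (0:ℝ)..(x + z), μ t) * lam) * (1 / N (x + z)) *
        Real.exp (-(∫ t in (0:ℝ)..z, 1 / N (x + t)))
      = Real.exp (2 * (∫ t in (0:ℝ)..x, μ t) * lam) *
          (p z * Real.exp (-∫ t in (0:ℝ)..z, (p t + q t))) := by
    intro z
    rw [hS z, hA z]
    have e1 : Real.exp (2 * ((∫ t in (0:ℝ)..x, μ t) + ∫ t in (0:ℝ)..z, μ (x + t)) * lam)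
        = Real.exp (2 * (∫ t in (0:ℝ)..x, μ t) * lam)
          * Real.exp (2 * (∫ t in (0:ℝ)..z, μ (x + t)) * lam) := by
      rw [← Real.exp_add]; congr 1; ring
    have e2 : Real.exp (2 * (∫ t in (0:ℝ)..z, μ (x + t)) * lam)
          * Real.exp (-(∫ t in (0:ℝ)..z, p t))
        = Real.exp (-((∫ t in (0:ℝ)..z, p t)
            + -(2 * lam) * ∫ t in (0:ℝ)..z, μ (x + t))) := by
      rw [← Real.exp_add]; congr 1; ring
    have hp1 : (1 : ℝ) / N (x + z) = p z := rfl
    have hp2 : (∫ t in (0:ℝ)..z, 1 / N (x + t)) = ∫ t in (0:ℝ)..z, p t := rfl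
    rw [hp1, hp2, e1, ← e2]
    ring
  calc coalF lam μ N x
      = ∫ z in Set.Ioi (0:ℝ),
          Real.exp (2 * (∫ t in (0:ℝ)..x, μ t) * lam) *
            (p z * Real.exp (-∫ t in (0:ℝ)..z, (p t + q t))) := by
        apply integral_congr_ae
        exact Filter.Eventually.of_forall (fun z => hpt z)
    _ = Real.exp (2 * (∫ t in (0:ℝ)..x, μ t) * lam) *
          ∫ z in Set.Ioi (0:ℝ), p z * Real.exp (-∫ t in (0:ℝ)..z, (p t + q t)) :=
        integral_const_mul _ _
    _ = Real.exp (2 * (∫ t in (0:ℝ)..x, μ t) * lam) *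
        (1 - ∫ z in Set.Ioi (0:ℝ), q z *
          Real.exp (-∫ t in (0:ℝ)..z, (p t + q t))) := by rw [hform]

lemma exists_gap (x : ℝ) (N Nbar : ℝ → ℝ)
    (hNpos : ∀ t, 0 < N t) (hNbarpos : ∀ t, 0 < Nbar t)
    (hge : ∀ t, N t ≤ Nbar t)
    (hNint : ∀ a b : ℝ, IntervalIntegrable (fun t => 1 / N t) volume a b)
    (hNbarint : ∀ a b : ℝ, IntervalIntegrable (fun t => 1 / Nbar t) volume a b)
    (hpos : 0 < volume {t : ℝ | x ≤ t ∧ N t < Nbar t}) :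
    ∃ n : ℕ, 0 < ∫ t in (0:ℝ)..(n:ℝ), (1 / N (x + t) - 1 / Nbar (x + t)) := by
  set D : Set ℝ := {t : ℝ | x ≤ t ∧ N t < Nbar t} with hDdef
  have hn : ∃ n : ℕ, 0 < volume (D ∩ Set.Icc x (x + n)) := by
    by_contra hcon
    push_neg at hcon
    have hzero : ∀ n : ℕ, volume (D ∩ Set.Icc x (x + n)) = 0 :=
      fun n => le_antisymm (hcon n) zero_le
    have hsub : D ⊆ ⋃ n : ℕ, D ∩ Set.Icc x (x + n) := by
      intro t ht
      obtain ⟨n, hn⟩ := exists_nat_ge (t - x)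
      exact Set.mem_iUnion.mpr ⟨n, ht, ⟨ht.1, by linarith⟩⟩
    have h1 : volume D ≤ ∑' n : ℕ, volume (D ∩ Set.Icc x (x + n)) :=
      (measure_mono hsub).trans (measure_iUnion_le _)
    simp only [hzero, tsum_zero] at h1
    exact absurd (le_antisymm h1 zero_le) (ne_of_gt hpos)
  obtain ⟨n, hn⟩ := hn
  refine ⟨n, ?_⟩
  set f : ℝ → ℝ := fun t => 1 / N (x + t) - 1 / Nbar (x + t) with hfdef
  have hfnn : ∀ t, 0 ≤ f t := by
    intro t
    have := one_div_le_one_div_of_le (hNpos (x + t)) (hge (x + t))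
    simp only [hfdef]
    linarith
  have hfint : IntervalIntegrable f volume 0 (n : ℝ) :=
    (shift_intervalIntegrable _ hNint x 0 n).sub (shift_intervalIntegrable _ hNbarint x 0 n)
  have hnn0 : (0:ℝ) ≤ (n:ℝ) := Nat.cast_nonneg n
  rw [intervalIntegral.integral_of_le hnn0]
  rw [setIntegral_pos_iff_support_of_nonneg_ae (ae_of_all _ hfnn)
    ((intervalIntegrable_iff_integrableOn_Ioc_of_le hnn0).mp hfint)]
  -- show positive measure of support ∩ Ioc 0 n
  set S : Set ℝ := (fun t => x + t) ⁻¹' (D ∩ Set.Icc x (x + n)) with hSdef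
  have hvolS : volume S = volume (D ∩ Set.Icc x (x + n)) :=
    measure_preimage_add volume x _
  have hsub2 : S \ {0} ⊆ Function.support f ∩ Set.Ioc (0:ℝ) (n:ℝ) := by
    rintro t ⟨htS, ht0⟩
    rw [hSdef, hDdef] at htS
    simp only [Set.mem_preimage, Set.mem_inter_iff, Set.mem_Icc,
      Set.mem_setOf_eq] at htS
    obtain ⟨⟨_, hlt⟩, htI1, htI2⟩ := htS
    have ht1 : 0 < t := by
      rcases lt_or_eq_of_le (by linarith : (0:ℝ) ≤ t) with h | h
      · exact h
      · exact absurd (show t ∈ ({0}:Set ℝ) by simp [← h]) ht0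
    constructor
    · have := one_div_lt_one_div_of_lt (hNpos (x + t)) hlt
      simp only [Function.mem_support, hfdef]
      intro hzero
      linarith
    · exact ⟨ht1, by linarith⟩
  calc (0:ENNReal) < volume (D ∩ Set.Icc x (x + n)) := hn
    _ = volume S := hvolS.symm
    _ = volume (S \ {0}) := (measure_diff_null Real.volume_singleton).symm
    _ ≤ volume (Function.support f ∩ Set.Ioc (0:ℝ) (n:ℝ)) := measure_mono hsub2

lemma Iq_strict_mono (q h hb : ℝ → ℝ)
    (hqint : ∀ a b : ℝ, IntervalIntegrable q volume a b)
    (hhint : ∀ a b : ℝ, IntervalIntegrable h volume a b)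
    (hhbint : ∀ a b : ℝ, IntervalIntegrable hb volume a b)
    (hqpos : ∀ t, 0 < q t)
    (c : ℝ) (hc : 0 < c) (hlbh : ∀ t, c ≤ h t) (hlbhb : ∀ t, c ≤ hb t)
    (hble : ∀ t, hb t ≤ h t)
    (n : ℕ) (hγ : 0 < ∫ t in (0:ℝ)..(n:ℝ), (h t - hb t)) :
    (∫ z in Set.Ioi (0:ℝ), q z * Real.exp (-∫ t in (0:ℝ)..z, (h t + q t)))
      < ∫ z in Set.Ioi (0:ℝ), q z * Real.exp (-∫ t in (0:ℝ)..z, (hb t + q t)) := by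
  have hqnn : ∀ t, 0 ≤ q t := fun t => (hqpos t).le
  obtain ⟨hIntQN, -⟩ := key_split h q hhint hqint c hc hlbh hqnn
  obtain ⟨hIntQB, -⟩ := key_split hb q hhbint hqint c hc hlbhb hqnn
  set AN : ℝ → ℝ := fun z => ∫ t in (0:ℝ)..z, (h t + q t) with hANdef
  set AB : ℝ → ℝ := fun z => ∫ t in (0:ℝ)..z, (hb t + q t) with hABdef
  have hGrep : ∀ z : ℝ, AN z - AB z = ∫ t in (0:ℝ)..z, (h t - hb t) := by
    intro z
    have e : ∀ t ∈ Set.uIcc (0:ℝ) z,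
        (fun t => (h t + q t) - (hb t + q t)) t = (fun t => h t - hb t) t :=
      fun t _ => by simp only []; ring
    rw [hANdef, hABdef]
    rw [← intervalIntegral.integral_sub ((hhint 0 z).add (hqint 0 z))
        ((hhbint 0 z).add (hqint 0 z))]
    exact intervalIntegral.integral_congr e
  have hgapnn : ∀ t, 0 ≤ h t - hb t := fun t => sub_nonneg.mpr (hble t)
  have hgapint : ∀ a b : ℝ, IntervalIntegrable (fun t => h t - hb t) volume a b :=
    fun a b => (hhint a b).sub (hhbint a b)
  have hGmono : ∀ u v : ℝ, u ≤ v →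
      (∫ t in (0:ℝ)..u, (h t - hb t)) ≤ ∫ t in (0:ℝ)..v, (h t - hb t) :=
    fun u v huv => primitive_mono _ hgapint hgapnn huv
  have hABle : ∀ z : ℝ, 0 ≤ z → AB z ≤ AN z := by
    intro z hz
    have h1 := hGrep z
    have h2 : 0 ≤ ∫ t in (0:ℝ)..z, (h t - hb t) :=
      intervalIntegral.integral_nonneg hz (fun t _ => hgapnn t)
    linarith
  have hABmono : ∀ u v : ℝ, u ≤ v → AB u ≤ AB v :=
    fun u v huv => primitive_mono _ (fun a b => (hhbint a b).add (hqint a b))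
      (fun t => add_nonneg (le_trans hc.le (hlbhb t)) (hqnn t)) huv
  set γ : ℝ := ∫ t in (0:ℝ)..(n:ℝ), (h t - hb t) with hγdef
  set ρ : ℝ := Real.exp (-(AB ((n:ℝ)+1))) * (1 - Real.exp (-γ)) with hρdef
  have hexpγ : Real.exp (-γ) < 1 := by
    rw [Real.exp_lt_one_iff]; linarith
  have hρpos : 0 < ρ := mul_pos (Real.exp_pos _) (by linarith)
  set d : ℝ → ℝ := fun z => q z * (Real.exp (-AB z) - Real.exp (-AN z)) with hddef
  have hdInt : IntegrableOn d (Set.Ioi 0) volume := by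
    have h1 := hIntQB.sub hIntQN
    exact h1.congr (ae_of_all _ (fun z => (mul_sub (q z) _ _).symm))
  have hdnn : ∀ z ∈ Set.Ioi (0:ℝ), 0 ≤ d z := by
    intro z hz
    apply mul_nonneg (hqnn z)
    have := hABle z (le_of_lt hz)
    have := Real.exp_le_exp.mpr (neg_le_neg this)
    linarith
  have hIocsub : Set.Ioc (n:ℝ) ((n:ℝ)+1) ⊆ Set.Ioi (0:ℝ) :=
    fun z hz => lt_of_le_of_lt (Nat.cast_nonneg n) hz.1
  have hptlow : ∀ z ∈ Set.Ioc (n:ℝ) ((n:ℝ)+1), q z * ρ ≤ d z := by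
    intro z hz
    have hzn : (n:ℝ) ≤ z := hz.1.le
    have hzn1 : z ≤ (n:ℝ) + 1 := hz.2
    have h1 : γ ≤ AN z - AB z := by
      rw [hGrep z]; exact hGmono _ _ hzn
    have h2 : AB z ≤ AB ((n:ℝ)+1) := hABmono _ _ hzn1
    have h3 : Real.exp (-AN z) ≤ Real.exp (-AB z) * Real.exp (-γ) := by
      rw [← Real.exp_add]
      apply Real.exp_le_exp.mpr
      linarith
    have h4 : Real.exp (-(AB ((n:ℝ)+1))) ≤ Real.exp (-AB z) :=
      Real.exp_le_exp.mpr (neg_le_neg h2)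
    have h5 : ρ ≤ Real.exp (-AB z) - Real.exp (-AN z) := by
      calc ρ = Real.exp (-(AB ((n:ℝ)+1))) * (1 - Real.exp (-γ)) := hρdef
        _ ≤ Real.exp (-AB z) * (1 - Real.exp (-γ)) :=
            mul_le_mul_of_nonneg_right h4 (by linarith)
        _ = Real.exp (-AB z) - Real.exp (-AB z) * Real.exp (-γ) := by ring
        _ ≤ Real.exp (-AB z) - Real.exp (-AN z) := by linarith
    exact mul_le_mul_of_nonneg_left h5 (hqnn z)
  have hq0 : 0 < ∫ z in Set.Ioc (n:ℝ) ((n:ℝ)+1), q z := by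
    rw [setIntegral_pos_iff_support_of_nonneg_ae (ae_of_all _ hqnn)
      ((intervalIntegrable_iff_integrableOn_Ioc_of_le
        (by linarith : (n:ℝ) ≤ (n:ℝ)+1)).mp (hqint _ _))]
    have hsub : Set.Ioc (n:ℝ) ((n:ℝ)+1)
        ⊆ Function.support q ∩ Set.Ioc (n:ℝ) ((n:ℝ)+1) :=
      fun z hz => ⟨fun h0 => (hqpos z).ne' h0, hz⟩
    calc (0:ENNReal) < volume (Set.Ioc (n:ℝ) ((n:ℝ)+1)) := by
          rw [Real.volume_Ioc]
          simp
      _ ≤ volume (Function.support q ∩ Set.Ioc (n:ℝ) ((n:ℝ)+1)) := measure_mono hsub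
  have hlow : (∫ z in Set.Ioc (n:ℝ) ((n:ℝ)+1), q z) * ρ
      ≤ ∫ z in Set.Ioc (n:ℝ) ((n:ℝ)+1), d z := by
    have h1 : (∫ z in Set.Ioc (n:ℝ) ((n:ℝ)+1), q z * ρ)
        ≤ ∫ z in Set.Ioc (n:ℝ) ((n:ℝ)+1), d z := by
      apply setIntegral_mono_on
      · exact ((intervalIntegrable_iff_integrableOn_Ioc_of_le
          (by linarith : (n:ℝ) ≤ (n:ℝ)+1)).mp ((hqint _ _).mul_const ρ))
      · exact hdInt.mono_set hIocsub
      · exact measurableSet_Ioc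
      · exact hptlow
    rw [integral_mul_const] at h1
    exact h1
  have hmain : 0 < ∫ z in Set.Ioc (n:ℝ) ((n:ℝ)+1), d z :=
    lt_of_lt_of_le (mul_pos hq0 hρpos) hlow
  have hfinal : 0 < ∫ z in Set.Ioi (0:ℝ), d z := by
    apply lt_of_lt_of_le hmain
    apply setIntegral_mono_set hdInt
      ((ae_restrict_iff' measurableSet_Ioi).mpr (ae_of_all _ hdnn))
      (HasSubset.Subset.eventuallyLE hIocsub)
  have hdiff : (∫ z in Set.Ioi (0:ℝ), q z * Real.exp (-AB z))
      - (∫ z in Set.Ioi (0:ℝ), q z * Real.exp (-AN z))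
      = ∫ z in Set.Ioi (0:ℝ), d z := by
    rw [← integral_sub hIntQB hIntQN]
    apply integral_congr_ae
    exact ae_of_all _ (fun z => (mul_sub (q z) _ _).symm)
  linarith

theorem coalF_population_comparison
    (lam : ℝ) (hlam : lam ≤ 0) (x : ℝ) (hx : 0 ≤ x)
    (μ : ℝ → ℝ) (hμpos : ∀ t, 0 < μ t)
    (hμint : ∀ a b : ℝ, IntervalIntegrable μ volume a b)
    (N Nbar : ℝ → ℝ) (B : ℝ)
    (hNpos : ∀ t, 0 < N t) (hNB : ∀ t, N t ≤ B)
    (hNbarpos : ∀ t, 0 < Nbar t) (hNbarB : ∀ t, Nbar t ≤ B)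
    (hNint : ∀ a b : ℝ, IntervalIntegrable (fun t => 1 / N t) volume a b)
    (hNbarint : ∀ a b : ℝ, IntervalIntegrable (fun t => 1 / Nbar t) volume a b)
    (hge : ∀ t, N t ≤ Nbar t)
    (hpos : 0 < volume {t : ℝ | x ≤ t ∧ N t < Nbar t}) :
    (lam < 0 → coalF lam μ Nbar x < coalF lam μ N x) ∧
    (lam = 0 → coalF lam μ N x = 1) := by
  have hB : 0 < B := lt_of_lt_of_le (hNpos 0) (hNB 0)
  constructor
  · intro hlt
    have hreprN := coalF_repr lam hlam x μ hμpos hμint N B hNpos hNB hNint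
    have hreprB := coalF_repr lam hlam x μ hμpos hμint Nbar B hNbarpos hNbarB hNbarint
    rw [hreprN, hreprB]
    apply mul_lt_mul_of_pos_left _ (Real.exp_pos _)
    apply sub_lt_sub_left
    obtain ⟨n, hγ⟩ := exists_gap x N Nbar hNpos hNbarpos hge hNint hNbarint hpos
    exact Iq_strict_mono (fun t => -(2 * lam) * μ (x + t))
      (fun t => 1 / N (x + t)) (fun t => 1 / Nbar (x + t))
      (fun a b => (shift_intervalIntegrable _ hμint x a b).const_mul _)
      (fun a b => shift_intervalIntegrable _ hNint x a b)
      (fun a b => shift_intervalIntegrable _ hNbarint x a b)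
      (fun t => mul_pos (by linarith) (hμpos (x + t)))
      (1 / B) (by positivity)
      (fun t => one_div_le_one_div_of_le (hNpos (x + t)) (hNB (x + t)))
      (fun t => one_div_le_one_div_of_le (hNbarpos (x + t)) (hNbarB (x + t)))
      (fun t => one_div_le_one_div_of_le (hNpos (x + t)) (hge (x + t)))
      n hγ
  · intro h0
    subst h0
    have hval := (key_Ioi (fun t => 1 / N (x + t))
      (fun a b => shift_intervalIntegrable _ hNint x a b)
      (1 / B) (by positivity)
      (fun t => one_div_le_one_div_of_le (hNpos (x + t)) (hNB (x + t)))).2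
    unfold coalF
    simp only [mul_zero, Real.exp_zero, one_mul]
    exact hval
end

section
/- Let λ < 0, μ a positive integrable rate function, and N a population function bounded above with 1/N locally integrable. Then x ↦ f(λ,μ,N,x) = ∫₀^∞ exp(2 s(0,x+z)λ) ℓ(x+z) exp(−∫₀^z ℓ(x+t)dt) dz is a strictly decreasing function of x ≥ 0. -/
open MeasureTheory

noncomputable def primI (g : ℝ → ℝ) (v : ℝ) : ℝ := ∫ t in (0:ℝ)..v, g t

lemma primI_sub {ℓ : ℝ → ℝ} (hint : ∀ a b : ℝ, IntervalIntegrable ℓ volume a b)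
    (a b : ℝ) : primI ℓ b - primI ℓ a = ∫ t in a..b, ℓ t :=
  intervalIntegral.integral_interval_sub_left (hint 0 b) (hint 0 a)

lemma primI_strictMono {ℓ : ℝ → ℝ} (hpos : ∀ t, 0 < ℓ t)
    (hint : ∀ a b : ℝ, IntervalIntegrable ℓ volume a b) :
    StrictMono (primI ℓ) := by
  intro a b hab
  have h : 0 < ∫ t in a..b, ℓ t :=
    intervalIntegral.intervalIntegral_pos_of_pos (hint a b) hpos hab
  have h2 := primI_sub hint a b
  linarith

lemma primI_cont {ℓ : ℝ → ℝ} (hint : ∀ a b : ℝ, IntervalIntegrable ℓ volume a b) :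
    Continuous (primI ℓ) :=
  intervalIntegral.continuous_primitive hint 0

lemma expD_intInt {ℓ : ℝ → ℝ} (hint : ∀ a b : ℝ, IntervalIntegrable ℓ volume a b)
    (a b : ℝ) :
    IntervalIntegrable (fun v => ℓ v * Real.exp (-(primI ℓ v))) volume a b :=
  (hint a b).mul_continuousOn
    (((Real.continuous_exp.comp (primI_cont hint).neg)).continuousOn)

lemma step_bound {ℓ : ℝ → ℝ} (hpos : ∀ t, 0 < ℓ t)
    (hint : ∀ a b : ℝ, IntervalIntegrable ℓ volume a b) {a b : ℝ} (hab : a ≤ b) :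
    |(Real.exp (-(primI ℓ a)) - Real.exp (-(primI ℓ b))) -
        ∫ v in a..b, ℓ v * Real.exp (-(primI ℓ v))|
      ≤ Real.exp (-(primI ℓ a)) * (primI ℓ b - primI ℓ a)^2 := by
  set L := primI ℓ with hL
  have hmono : Monotone L := (primI_strictMono hpos hint).monotone
  set Δ : ℝ := L b - L a with hΔdef
  have hΔ : 0 ≤ Δ := by have := hmono hab; simp [hΔdef]; linarith
  have hintℓ : ∫ t in a..b, ℓ t = Δ := (primI_sub hint a b).symm
  -- bounds on the integral
  have hIu : (∫ v in a..b, ℓ v * Real.exp (-(L v)))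
      ≤ ∫ v in a..b, ℓ v * Real.exp (-(L a)) := by
    apply intervalIntegral.integral_mono_on hab (expD_intInt hint a b)
      ((hint a b).mul_continuousOn continuousOn_const)
    intro v hv
    have h1 : L a ≤ L v := hmono hv.1
    have := (hpos v).le
    have h2 : Real.exp (-(L v)) ≤ Real.exp (-(L a)) := Real.exp_le_exp.mpr (by linarith)
    nlinarith
  have hIl : (∫ v in a..b, ℓ v * Real.exp (-(L b)))
      ≤ ∫ v in a..b, ℓ v * Real.exp (-(L v)) := by
    apply intervalIntegral.integral_mono_on hab
      ((hint a b).mul_continuousOn continuousOn_const) (expD_intInt hint a b)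
    intro v hv
    have h1 : L v ≤ L b := hmono hv.2
    have := (hpos v).le
    have h2 : Real.exp (-(L b)) ≤ Real.exp (-(L v)) := Real.exp_le_exp.mpr (by linarith)
    nlinarith
  have hmc : ∀ c : ℝ, (∫ v in a..b, ℓ v * c) = Δ * c := by
    intro c; rw [intervalIntegral.integral_mul_const, hintℓ]
  rw [hmc] at hIu hIl
  -- bounds on the exponential difference
  have hEb : Real.exp (-(L b)) = Real.exp (-(L a)) * Real.exp (-Δ) := by
    rw [← Real.exp_add, hΔdef]; ring_nf
  have h1 : -Δ + 1 ≤ Real.exp (-Δ) := Real.add_one_le_exp _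
  have h2 : Δ + 1 ≤ Real.exp Δ := Real.add_one_le_exp _
  have h3 : Real.exp Δ * Real.exp (-Δ) = 1 := by rw [← Real.exp_add]; simp
  have hea : 0 < Real.exp (-(L a)) := Real.exp_pos _
  have heΔ : 0 < Real.exp (-Δ) := Real.exp_pos _
  -- conclude
  have hYu : Real.exp (-(L a)) - Real.exp (-(L b)) ≤ Δ * Real.exp (-(L a)) := by
    rw [hEb]; nlinarith
  have h4 : Δ * Real.exp (-Δ) + Real.exp (-Δ) ≤ 1 := by
    nlinarith [mul_le_mul_of_nonneg_right h2 heΔ.le]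
  have hYl : Δ * Real.exp (-(L b)) ≤ Real.exp (-(L a)) - Real.exp (-(L b)) := by
    rw [hEb]; nlinarith [mul_le_mul_of_nonneg_left h4 hea.le]
  have hgap : Δ * Real.exp (-(L a)) - Δ * Real.exp (-(L b))
      ≤ Real.exp (-(L a)) * Δ ^ 2 := by
    rw [hEb]; nlinarith
  rw [abs_sub_le_iff]
  constructor
  · linarith
  · linarith

lemma exp_ident {ℓ : ℝ → ℝ} (hpos : ∀ t, 0 < ℓ t)
    (hint : ∀ a b : ℝ, IntervalIntegrable ℓ volume a b) {a b : ℝ} (hab : a ≤ b) :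
    ∫ v in a..b, ℓ v * Real.exp (-(primI ℓ v))
      = Real.exp (-(primI ℓ a)) - Real.exp (-(primI ℓ b)) := by
  set L := primI ℓ with hLdef
  have hsm : StrictMono L := primI_strictMono hpos hint
  have hmono : Monotone L := hsm.monotone
  set Δ : ℝ := L b - L a with hΔdef
  have hΔ : 0 ≤ Δ := by have := hmono hab; simp only [hΔdef]; linarith
  set E : ℝ := (Real.exp (-(L a)) - Real.exp (-(L b)))
      - ∫ v in a..b, ℓ v * Real.exp (-(L v)) with hEdef
  have claim : ∀ n : ℕ, 1 ≤ n → |E| ≤ Real.exp (-(L a)) * Δ ^ 2 / n := by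
    intro n hn
    have hn0 : (n : ℝ) ≠ 0 := Nat.cast_ne_zero.mpr (by omega)
    have hnpos : (0:ℝ) < n := by positivity
    set c : ℕ → ℝ := fun i => L a + i * (Δ / n) with hcdef
    have hIVT : ∀ i : ℕ, i ≤ n → ∃ u, u ∈ Set.Icc a b ∧ L u = c i := by
      intro i hi
      have hci : c i ∈ Set.Icc (L a) (L b) := by
        constructor
        · have : 0 ≤ (i : ℝ) * (Δ / n) := by positivity
          simp only [hcdef]; linarith
        · have h1 : (i : ℝ) ≤ n := Nat.cast_le.mpr hi
          have h2 : (i : ℝ) * (Δ / n) ≤ n * (Δ / n) :=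
            mul_le_mul_of_nonneg_right h1 (by positivity)
          have h3 : (n : ℝ) * (Δ / n) = Δ := by field_simp
          simp only [hcdef]; linarith [h2.trans_eq h3]
      have := intermediate_value_Icc hab (primI_cont hint).continuousOn hci
      obtain ⟨u, hu, hLu⟩ := this
      exact ⟨u, hu, hLu⟩
    set t : ℕ → ℝ := fun i => if h : i ≤ n then (hIVT i h).choose else b with htdef
    have ht : ∀ i : ℕ, i ≤ n → t i ∈ Set.Icc a b ∧ L (t i) = c i := by
      intro i hi
      simp only [htdef, dif_pos hi]
      exact (hIVT i hi).choose_spec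
    have ht0 : t 0 = a := by
      have h := ht 0 (by omega)
      have : L (t 0) = L a := by rw [h.2]; simp [hcdef]
      exact hsm.injective this
    have htn : t n = b := by
      have h := ht n le_rfl
      have : L (t n) = L b := by
        rw [h.2]; simp only [hcdef]; field_simp; rw [hΔdef]; ring
      exact hsm.injective this
    have htmono : ∀ k, k < n → t k ≤ t (k + 1) := by
      intro k hk
      have h1 := (ht k hk.le).2
      have h2 := (ht (k + 1) (by omega)).2
      have : L (t k) ≤ L (t (k + 1)) := by
        rw [h1, h2]; simp only [hcdef]
        have : (k : ℝ) * (Δ / n) ≤ (k + 1 : ℕ) * (Δ / n) := by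
          apply mul_le_mul_of_nonneg_right _ (by positivity)
          push_cast; linarith
        linarith
      exact hsm.le_iff_le.mp this
    have hsumI : ∑ k ∈ Finset.range n, ∫ v in t k..t (k + 1), ℓ v * Real.exp (-(L v))
        = ∫ v in a..b, ℓ v * Real.exp (-(L v)) := by
      have := intervalIntegral.sum_integral_adjacent_intervals (μ := volume) (a := t)
        (n := n) (f := fun v => ℓ v * Real.exp (-(L v)))
        (fun k _ => expD_intInt hint _ _)
      rwa [ht0, htn] at this
    have hsumE : ∑ k ∈ Finset.range n,
        (Real.exp (-(L (t k))) - Real.exp (-(L (t (k + 1)))))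
        = Real.exp (-(L a)) - Real.exp (-(L b)) := by
      have := Finset.sum_range_sub' (f := fun i => Real.exp (-(L (t i)))) n
      simpa [ht0, htn] using this
    have hEeq : E = ∑ k ∈ Finset.range n,
        ((Real.exp (-(L (t k))) - Real.exp (-(L (t (k + 1)))))
          - ∫ v in t k..t (k + 1), ℓ v * Real.exp (-(L v))) := by
      rw [Finset.sum_sub_distrib, hsumI, hsumE]
    calc |E| ≤ ∑ k ∈ Finset.range n,
          |(Real.exp (-(L (t k))) - Real.exp (-(L (t (k + 1)))))
            - ∫ v in t k..t (k + 1), ℓ v * Real.exp (-(L v))| := by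
          rw [hEeq]; exact Finset.abs_sum_le_sum_abs _ _
      _ ≤ ∑ k ∈ Finset.range n, Real.exp (-(L a)) * (Δ / n) ^ 2 := by
          apply Finset.sum_le_sum
          intro k hk
          have hk' := Finset.mem_range.mp hk
          have hstep := step_bound hpos hint (htmono k hk')
          have e1 : L (t (k + 1)) - L (t k) = Δ / n := by
            rw [(ht k hk'.le).2, (ht (k + 1) (by omega)).2]
            simp only [hcdef]; push_cast; ring
          have e2 : Real.exp (-(L (t k))) ≤ Real.exp (-(L a)) := by
            apply Real.exp_le_exp.mpr
            have := hmono ((ht k hk'.le).1).1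
            linarith
          rw [e1] at hstep
          refine hstep.trans ?_
          exact mul_le_mul_of_nonneg_right e2 (sq_nonneg _)
      _ = Real.exp (-(L a)) * Δ ^ 2 / n := by
          rw [Finset.sum_const, Finset.card_range, nsmul_eq_mul]
          field_simp
  have hlim : Filter.Tendsto (fun n : ℕ => Real.exp (-(L a)) * Δ ^ 2 / n)
      Filter.atTop (nhds 0) := tendsto_const_div_atTop_nhds_zero_nat _
  have habs : |E| ≤ 0 := by
    refine ge_of_tendsto hlim ?_
    filter_upwards [Filter.eventually_ge_atTop 1] with n hn using claim n hn
  have : E = 0 := abs_nonpos_iff.mp habs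
  simp only [hEdef] at this
  linarith

lemma shift_Ioi (F : ℝ → ℝ) (w : ℝ) :
    ∫ z in Set.Ioi (0:ℝ), F (w + z) = ∫ v in Set.Ioi w, F v := by
  have h := (measurePreserving_add_left volume w).setIntegral_preimage_emb
    (MeasurableEquiv.addLeft w).measurableEmbedding F (Set.Ioi w)
  have hpre : (fun z => w + z) ⁻¹' Set.Ioi w = Set.Ioi (0:ℝ) := by
    ext z; simp [Set.mem_Ioi]
  rw [hpre] at h
  exact h

variable {ℓ : ℝ → ℝ}

lemma natTendsto (a : ℝ) :
    Filter.Tendsto (fun i : ℕ => a + i) Filter.atTop Filter.atTop :=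
  Filter.tendsto_atTop_add_const_left _ _ tendsto_natCast_atTop_atTop

lemma cD_intInt (hint : ∀ a b : ℝ, IntervalIntegrable ℓ volume a b)
    {c : ℝ → ℝ} (hc : Continuous c) (a b : ℝ) :
    IntervalIntegrable (fun v => c v * (ℓ v * Real.exp (-(primI ℓ v)))) volume a b :=
  (expD_intInt hint a b).continuousOn_mul hc.continuousOn

lemma cD_norm_integral_le (hpos : ∀ t, 0 < ℓ t)
    (hint : ∀ a b : ℝ, IntervalIntegrable ℓ volume a b)
    {c : ℝ → ℝ} (hc : Continuous c) {a : ℝ} (hc1 : ∀ v, a ≤ v → |c v| ≤ 1)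
    {b : ℝ} (hab : a ≤ b) :
    (∫ v in a..b, ‖c v * (ℓ v * Real.exp (-(primI ℓ v)))‖)
      ≤ Real.exp (-(primI ℓ a)) := by
  have h1 : (∫ v in a..b, ‖c v * (ℓ v * Real.exp (-(primI ℓ v)))‖)
      ≤ ∫ v in a..b, ℓ v * Real.exp (-(primI ℓ v)) := by
    apply intervalIntegral.integral_mono_on hab
      ((cD_intInt hint hc a b).norm) (expD_intInt hint a b)
    intro v hv
    have hD : 0 ≤ ℓ v * Real.exp (-(primI ℓ v)) :=
      mul_nonneg (hpos v).le (Real.exp_pos _).le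
    rw [Real.norm_eq_abs, abs_mul, abs_of_nonneg hD]
    calc |c v| * (ℓ v * Real.exp (-(primI ℓ v)))
        ≤ 1 * (ℓ v * Real.exp (-(primI ℓ v))) :=
          mul_le_mul_of_nonneg_right (hc1 v hv.1) hD
      _ = ℓ v * Real.exp (-(primI ℓ v)) := one_mul _
  rw [exp_ident hpos hint hab] at h1
  have := (Real.exp_pos (-(primI ℓ b))).le
  linarith

lemma cD_integrableOn_Ioi (hpos : ∀ t, 0 < ℓ t)
    (hint : ∀ a b : ℝ, IntervalIntegrable ℓ volume a b)
    {c : ℝ → ℝ} (hc : Continuous c) {a : ℝ} (hc1 : ∀ v, a ≤ v → |c v| ≤ 1) :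
    IntegrableOn (fun v => c v * (ℓ v * Real.exp (-(primI ℓ v)))) (Set.Ioi a) volume := by
  apply MeasureTheory.integrableOn_Ioi_of_intervalIntegral_norm_bounded
    (Real.exp (-(primI ℓ a))) a
    (fun i : ℕ => (cD_intInt hint hc a (a + i)).1) (natTendsto a)
  filter_upwards with i
  exact cD_norm_integral_le hpos hint hc hc1 (le_add_of_nonneg_right (Nat.cast_nonneg i))

lemma D_integrableOn_Ioi (hpos : ∀ t, 0 < ℓ t)
    (hint : ∀ a b : ℝ, IntervalIntegrable ℓ volume a b) (a : ℝ) :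
    IntegrableOn (fun v => ℓ v * Real.exp (-(primI ℓ v))) (Set.Ioi a) volume := by
  have := cD_integrableOn_Ioi hpos hint (c := fun _ => 1) continuous_const
    (a := a) (fun v _ => by norm_num)
  simpa using this

lemma D_tail_le (hpos : ∀ t, 0 < ℓ t)
    (hint : ∀ a b : ℝ, IntervalIntegrable ℓ volume a b) (a : ℝ) :
    (∫ v in Set.Ioi a, ℓ v * Real.exp (-(primI ℓ v))) ≤ Real.exp (-(primI ℓ a)) := by
  have hlim := MeasureTheory.intervalIntegral_tendsto_integral_Ioi a
    (D_integrableOn_Ioi hpos hint a) (natTendsto a)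
  refine le_of_tendsto hlim ?_
  filter_upwards with i
  rw [exp_ident hpos hint (le_add_of_nonneg_right (Nat.cast_nonneg i))]
  have := (Real.exp_pos (-(primI ℓ (a + i)))).le
  linarith



theorem coalF_strictAnti
    (lam : ℝ) (hlam : lam < 0)
    (μ : ℝ → ℝ) (hμpos : ∀ t, 0 < μ t)
    (hμint : ∀ a b : ℝ, IntervalIntegrable μ volume a b)
    (N : ℝ → ℝ) (B : ℝ) (hNpos : ∀ t, 0 < N t) (hNB : ∀ t, N t ≤ B)
    (hNint : ∀ a b : ℝ, IntervalIntegrable (fun t => 1 / N t) volume a b) :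
    StrictAntiOn (coalF lam μ N) (Set.Ici (0:ℝ)) := by
  intro x hx y hy hxy
  simp only [Set.mem_Ici] at hx hy
  set ℓ : ℝ → ℝ := fun t => 1 / N t with hℓdef
  have hpos : ∀ t, 0 < ℓ t := fun t => one_div_pos.mpr (hNpos t)
  have hint : ∀ a b : ℝ, IntervalIntegrable ℓ volume a b := hNint
  set L : ℝ → ℝ := primI ℓ with hLdef
  set s : ℝ → ℝ := primI μ with hsdef
  set G : ℝ → ℝ := fun v => Real.exp (2 * s v * lam) * (ℓ v * Real.exp (-(L v)))
    with hGdef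
  -- facts about s
  have hsmono : Monotone s := (primI_strictMono hμpos hμint).monotone
  have hs0 : s 0 = 0 := intervalIntegral.integral_same
  have hsnn : ∀ v, 0 ≤ v → 0 ≤ s v := by
    intro v hv; rw [← hs0]; exact hsmono hv
  have hccont : Continuous fun v => Real.exp (2 * s v * lam) :=
    Real.continuous_exp.comp (((continuous_const.mul (primI_cont hμint)).mul
      continuous_const))
  have hcle : ∀ a : ℝ, 0 ≤ a → ∀ v, a ≤ v → |Real.exp (2 * s v * lam)| ≤ 1 := by
    intro a ha v hv
    rw [abs_of_pos (Real.exp_pos _)]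
    rw [Real.exp_le_one_iff]
    have := hsnn v (ha.trans hv)
    nlinarith
  -- representation of coalF
  have hrepr : ∀ w : ℝ, coalF lam μ N w = Real.exp (L w) * ∫ v in Set.Ioi w, G v := by
    intro w
    have key : ∀ z : ℝ,
        Real.exp (2 * (∫ t in (0:ℝ)..(w + z), μ t) * lam) * (1 / N (w + z)) *
          Real.exp (-(∫ t in (0:ℝ)..z, 1 / N (w + t)))
        = Real.exp (L w) * G (w + z) := by
      intro z
      have h1a : (∫ t in (0:ℝ)..z, ℓ (w + t)) = ∫ t in w..(w + z), ℓ t := by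
        simpa using intervalIntegral.integral_comp_add_left (a := 0) (b := z) ℓ w
      have h1 : (∫ t in (0:ℝ)..z, 1 / N (w + t)) = L (w + z) - L w :=
        h1a.trans (primI_sub hint w (w + z)).symm
      rw [h1]
      have h2 : Real.exp (-(L (w + z) - L w)) =
          Real.exp (L w) * Real.exp (-(L (w + z))) := by
        rw [← Real.exp_add]; ring_nf
      have h3 : (∫ t in (0:ℝ)..(w + z), μ t) = s (w + z) := rfl
      rw [h2, h3]
      simp only [hGdef]
      show Real.exp (2 * s (w + z) * lam) * (1 / N (w + z)) *
          (Real.exp (L w) * Real.exp (-(L (w + z))))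
        = Real.exp (L w) * (Real.exp (2 * s (w + z) * lam) *
            (ℓ (w + z) * Real.exp (-(L (w + z)))))
      ring
    rw [coalF]
    rw [show (fun z => Real.exp (2 * (∫ t in (0:ℝ)..(w + z), μ t) * lam) *
          (1 / N (w + z)) * Real.exp (-(∫ t in (0:ℝ)..z, 1 / N (w + t))))
        = fun z => Real.exp (L w) * G (w + z) from funext key]
    rw [MeasureTheory.integral_const_mul]
    rw [shift_Ioi G w]
  -- integrability facts
  have hGint : ∀ a b : ℝ, IntervalIntegrable G volume a b := fun a b =>
    cD_intInt hint hccont a b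
  have hGIoiy : IntegrableOn G (Set.Ioi y) volume :=
    cD_integrableOn_Ioi hpos hint hccont (hcle y hy)
  set D : ℝ → ℝ := fun v => ℓ v * Real.exp (-(L v)) with hDdef
  set c : ℝ := Real.exp (2 * s y * lam) with hcdef
  have hcpos : 0 < c := Real.exp_pos _
  set I : ℝ := ∫ v in x..y, G v with hIdef
  set Ry : ℝ := ∫ v in Set.Ioi y, G v with hRydef
  -- split
  have hsplit : (∫ v in Set.Ioi x, G v) = I + Ry := by
    have hu : Set.Ioc x y ∪ Set.Ioi y = Set.Ioi x := Set.Ioc_union_Ioi_eq_Ioi hxy.le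
    have h := MeasureTheory.setIntegral_union (Set.Ioc_disjoint_Ioi_same)
      measurableSet_Ioi (hGint x y).1 hGIoiy (f := G) (μ := volume)
    rw [hu] at h
    rw [h, hIdef, intervalIntegral.integral_of_le hxy.le]
  have hident : (∫ v in x..y, D v) = Real.exp (-(L x)) - Real.exp (-(L y)) :=
    exp_ident hpos hint hxy.le
  -- claim 1 : c * (exp(-L x) - exp(-L y)) < I
  have claim1 : c * (Real.exp (-(L x)) - Real.exp (-(L y))) < I := by
    have hDI : IntervalIntegrable D volume x y := expD_intInt hint x y
    have h0 : (∫ v in x..y, c * D v) = c * (Real.exp (-(L x)) - Real.exp (-(L y))) := by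
      rw [intervalIntegral.integral_const_mul, hident]
    have hposint : 0 < ∫ v in Set.Ioc x y, (G v - c * D v) := by
      refine (MeasureTheory.setIntegral_pos_iff_support_of_nonneg_ae ?_ ?_).mpr ?_
      · rw [Filter.EventuallyLE, ae_restrict_iff' measurableSet_Ioc]
        filter_upwards with v hv
        have h1 : s v ≤ s y := hsmono hv.2
        have h2 : c ≤ Real.exp (2 * s v * lam) := by
          rw [hcdef]; apply Real.exp_le_exp.mpr; nlinarith
        have h3 : 0 < ℓ v * Real.exp (-(L v)) := mul_pos (hpos v) (Real.exp_pos _)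
        simp only [Pi.zero_apply, hGdef, hDdef]
        nlinarith
      · exact ((hGint x y).sub (hDI.const_mul c)).1
      · refine lt_of_lt_of_le ?_ (measure_mono (?_ :
          Set.Ioo x y ⊆ _))
        · rw [Real.volume_Ioo]; simp [hxy]
        · intro v hv
          constructor
          · have h1 : s v < s y := primI_strictMono hμpos hμint hv.2
            have h2 : c < Real.exp (2 * s v * lam) := by
              rw [hcdef]; apply Real.exp_lt_exp.mpr; nlinarith
            have h3 : 0 < ℓ v * Real.exp (-(L v)) := mul_pos (hpos v) (Real.exp_pos _)
            have : 0 < G v - c * D v := by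
              simp only [hGdef, hDdef]; nlinarith
            exact Function.mem_support.mpr (by intro h; rw [h] at this; exact lt_irrefl 0 this)
          · exact ⟨hv.1, hv.2.le⟩
    have hsub : (∫ v in x..y, (G v - c * D v))
        = I - ∫ v in x..y, c * D v := by
      rw [hIdef]; exact intervalIntegral.integral_sub (hGint x y) (hDI.const_mul c)
    rw [intervalIntegral.integral_of_le hxy.le] at hsub
    rw [hsub, h0] at hposint
    linarith
  -- claim 2 : Ry ≤ c * exp (-(L y))
  have claim2 : Ry ≤ c * Real.exp (-(L y)) := by
    have h1 : Ry ≤ ∫ v in Set.Ioi y, c * D v := by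
      apply MeasureTheory.setIntegral_mono_on hGIoiy
        ((D_integrableOn_Ioi hpos hint y).const_mul c) measurableSet_Ioi
      intro v hv
      have h2 : s y ≤ s v := hsmono (le_of_lt hv)
      have h3 : Real.exp (2 * s v * lam) ≤ c := by
        rw [hcdef]; apply Real.exp_le_exp.mpr; nlinarith
      have h4 : 0 ≤ ℓ v * Real.exp (-(L v)) := (mul_pos (hpos v) (Real.exp_pos _)).le
      simp only [hGdef, ← hLdef]
      nlinarith
    rw [MeasureTheory.integral_const_mul] at h1
    have h5 := D_tail_le hpos hint y
    nlinarith
  -- final assembly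
  have hLxy : L x < L y := primI_strictMono hpos hint hxy
  have h7 : Real.exp (L x) * Real.exp (-(L x)) = 1 := by rw [← Real.exp_add]; simp
  have h8 : Real.exp (L y) * Real.exp (-(L y)) = 1 := by rw [← Real.exp_add]; simp
  have hexp : Real.exp (L x) < Real.exp (L y) := Real.exp_lt_exp.mpr hLxy
  have key1 : Real.exp (L x) * (c * (Real.exp (-(L x)) - Real.exp (-(L y))))
      = c - c * (Real.exp (L x) * Real.exp (-(L y))) := by
    linear_combination c * h7
  have key2 : (Real.exp (L y) - Real.exp (L x)) * (c * Real.exp (-(L y)))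
      = c - c * (Real.exp (L x) * Real.exp (-(L y))) := by
    linear_combination c * h8
  have h5 : (Real.exp (L y) - Real.exp (L x)) * Ry
      ≤ (Real.exp (L y) - Real.exp (L x)) * (c * Real.exp (-(L y))) :=
    mul_le_mul_of_nonneg_left claim2 (by linarith)
  have h6 : Real.exp (L x) * (c * (Real.exp (-(L x)) - Real.exp (-(L y))))
      < Real.exp (L x) * I := mul_lt_mul_of_pos_left claim1 (Real.exp_pos _)
  rw [hrepr x, hrepr y, hsplit]
  nlinarith [h5, h6, key1, key2]
end
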